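/- Let S_λ ⊆ S_μ be Young subgroups of S_n, let M be an H_n(q)-module, and for each basic transposition index j set U_j = Ker((T_j - q) on M) (or U_j = Im((T_j+1) on M) uniformly). Put Υ(λ) = ∩_{τ_j ∈ B_λ} U_j and Σ(λ) = Σ_{τ_j ∈ B_λ} U_j, and similarly for μ. Then with x = Σ_{σ ∈ D(S_μ/S_λ)} T_σ and y = Σ_{σ ∈ D(S_λ\S_μ)} (-1)^{ℓ(σ)} q^{m-ℓ(σ)} T_σ (m the maximal length of elements of D(S_λ\S_μ)), one has x·Υ(λ) ⊆ Υ(μ) and y·Σ(μ) ⊆ Σ(λ). -/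

import Mathlib

noncomputable section
open Classical

variable {k : Type} [Field k] {N : ℕ}

/-- The basic transposition `τ_i = (i, i+1)` in `S_{N+1}`. -/
def tau (i : Fin N) : Equiv.Perm (Fin (N + 1)) := Equiv.swap i.castSucc i.succ

/-- The Coxeter length of a permutation. -/
def len (σ : Equiv.Perm (Fin (N + 1))) : ℕ :=
  sInf {m | ∃ l : List (Fin N), l.length = m ∧ (l.map tau).prod = σ}

/-- The Young subgroup `S_λ` generated by the basic transpositions indexed by `B`. -/
def youngSubgroup (B : Set (Fin N)) : Subgroup (Equiv.Perm (Fin (N + 1))) :=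
  Subgroup.closure (tau '' B)

/-- `σ` is a distinguished (minimal length) left coset representative of `σ S_λ`. -/
def IsDistL (B : Set (Fin N)) (σ : Equiv.Perm (Fin (N + 1))) : Prop :=
  ∀ s ∈ youngSubgroup B, len σ ≤ len (σ * s)

/-- `σ` is a distinguished (minimal length) right coset representative of `S_λ σ`. -/
def IsDistR (B : Set (Fin N)) (σ : Equiv.Perm (Fin (N + 1))) : Prop :=
  ∀ s ∈ youngSubgroup B, len σ ≤ len (s * σ)

/-- A family of operators `T i` on `M` makes `M` a module over the Hecke
algebra `H_{N+1}(q)`. -/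
def IsHeckeRep {M : Type} [AddCommGroup M] [Module k M] (q : k)
    (T : Fin N → Module.End k M) : Prop :=
  (∀ i j : Fin N, ((i : ℕ) + 1 = j ∨ (j : ℕ) + 1 = i) →
      T i * T j * T i = T j * T i * T j) ∧
  (∀ i j : Fin N, ((i : ℕ) + 1 < j ∨ (j : ℕ) + 1 < i) → T i * T j = T j * T i) ∧
  (∀ i : Fin N, (T i - q • 1) * (T i + 1) = 0)

/-- The standard basis element `T_σ`: the product of the `T_i` along a reduced
word for `σ` (junk value `0` if no word exists, which never happens). -/
def Tperm {M : Type} [AddCommGroup M] [Module k M]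
    (T : Fin N → Module.End k M) (σ : Equiv.Perm (Fin (N + 1))) : Module.End k M :=
  if h : ∃ l : List (Fin N), (l.map tau).prod = σ ∧ l.length = len σ then
    ((h.choose.map T).prod) else 0

def invSet (σ : Equiv.Perm (Fin (N + 1))) : Finset (Fin (N + 1) × Fin (N + 1)) :=
  Finset.univ.filter (fun p => p.1 < p.2 ∧ σ p.2 < σ p.1)

def invCount (σ : Equiv.Perm (Fin (N + 1))) : ℕ := (invSet σ).card

lemma mem_invSet {σ : Equiv.Perm (Fin (N + 1))} {p : Fin (N+1) × Fin (N+1)} :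
    p ∈ invSet σ ↔ p.1 < p.2 ∧ σ p.2 < σ p.1 := by
  simp [invSet]

lemma tau_mul_self (i : Fin N) : tau i * tau i = 1 := by
  simp [tau, Equiv.swap_mul_self]

lemma tau_castSucc (i : Fin N) : tau i i.castSucc = i.succ := by
  simp [tau]

lemma tau_succ (i : Fin N) : tau i i.succ = i.castSucc := by
  simp [tau]

lemma tau_apply_of_ne (i : Fin N) {p : Fin (N+1)} (h1 : p ≠ i.castSucc) (h2 : p ≠ i.succ) :
    tau i p = p := Equiv.swap_apply_of_ne_of_ne h1 h2

lemma tau_lt_tau {i : Fin N} {p q : Fin (N+1)} (hpq : p < q)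
    (hne : ¬(p = i.castSucc ∧ q = i.succ)) : tau i p < tau i q := by
  have hic : (i.castSucc : Fin (N+1)).val = i.val := rfl
  have his : (i.succ : Fin (N+1)).val = i.val + 1 := rfl
  rcases eq_or_ne p i.castSucc with hp | hp <;> rcases eq_or_ne q i.succ with hq | hq
  · exact absurd ⟨hp, hq⟩ hne
  · subst hp
    have hq2 : q ≠ i.castSucc := ne_of_gt hpq
    rw [tau_castSucc, tau_apply_of_ne i hq2 hq]
    simp only [Fin.lt_def, Ne, Fin.ext_iff] at *
    omega
  · subst hq
    have hp2 : p ≠ i.succ := by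
      simp only [Fin.lt_def, Ne, Fin.ext_iff] at *
      omega
    rw [tau_succ, tau_apply_of_ne i hp hp2]
    simp only [Fin.lt_def, Ne, Fin.ext_iff] at *
    omega
  · rcases eq_or_ne p i.succ with hp2 | hp2
    · subst hp2
      have hq2 : q ≠ i.castSucc := by
        simp only [Fin.lt_def, Ne, Fin.ext_iff] at *
        omega
      rw [tau_succ, tau_apply_of_ne i hq2 hq]
      simp only [Fin.lt_def, Ne, Fin.ext_iff] at *
      omega
    · rcases eq_or_ne q i.castSucc with hq2 | hq2
      · subst hq2
        rw [tau_castSucc, tau_apply_of_ne i hp hp2]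
        simp only [Fin.lt_def, Ne, Fin.ext_iff] at *
        omega
      · rw [tau_apply_of_ne i hp hp2, tau_apply_of_ne i hq2 hq]
        exact hpq

lemma perm_mul_apply (σ τ : Equiv.Perm (Fin (N+1))) (p : Fin (N+1)) : (σ * τ) p = σ (τ p) := rfl

lemma erase_card_eq (σ : Equiv.Perm (Fin (N + 1))) (i : Fin N) :
    ((invSet (σ * tau i)).erase (i.castSucc, i.succ)).card
      = ((invSet σ).erase (i.castSucc, i.succ)).card := by
  apply Finset.card_bij' (fun p _ => (tau i p.1, tau i p.2)) (fun p _ => (tau i p.1, tau i p.2))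
  · intro a ha
    rw [Finset.mem_erase, mem_invSet] at ha ⊢
    obtain ⟨hane, halt, hainv⟩ := ha
    have hne : ¬(a.1 = i.castSucc ∧ a.2 = i.succ) := by
      rintro ⟨h1, h2⟩; exact hane (Prod.ext h1 h2)
    have hlt := tau_lt_tau halt hne
    refine ⟨?_, hlt, ?_⟩
    · intro h
      have h1 : tau i a.1 = i.castSucc := congrArg Prod.fst h
      have h2 : tau i a.2 = i.succ := congrArg Prod.snd h
      have : a.1 = tau i i.castSucc := by rw [← h1]; simp [tau]
      have h2' : a.2 = tau i i.succ := by rw [← h2]; simp [tau]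
      rw [tau_castSucc] at this; rw [tau_succ] at h2'
      rw [this, h2'] at halt
      exact absurd halt (not_lt.2 (le_of_lt (Fin.castSucc_lt_succ (i := i))))
    · simpa [perm_mul_apply] using hainv
  · intro a ha
    rw [Finset.mem_erase, mem_invSet] at ha ⊢
    obtain ⟨hane, halt, hainv⟩ := ha
    have hne : ¬(a.1 = i.castSucc ∧ a.2 = i.succ) := by
      rintro ⟨h1, h2⟩; exact hane (Prod.ext h1 h2)
    have hlt := tau_lt_tau halt hne
    refine ⟨?_, hlt, ?_⟩
    · intro h
      have h1 : tau i a.1 = i.castSucc := congrArg Prod.fst h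
      have h2 : tau i a.2 = i.succ := congrArg Prod.snd h
      have h1' : a.1 = tau i i.castSucc := by rw [← h1]; simp [tau]
      have h2' : a.2 = tau i i.succ := by rw [← h2]; simp [tau]
      rw [tau_castSucc] at h1'; rw [tau_succ] at h2'
      rw [h1', h2'] at halt
      exact absurd halt (not_lt.2 (le_of_lt (Fin.castSucc_lt_succ (i := i))))
    · simp only [perm_mul_apply]
      have e1 : tau i (tau i a.1) = a.1 := by simp [tau]
      have e2 : tau i (tau i a.2) = a.2 := by simp [tau]
      rw [e1, e2]; exact hainv
  · intro a _; ext <;> simp [tau]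
  · intro a _; ext <;> simp [tau]

lemma invCount_mul_tau_of_lt {σ : Equiv.Perm (Fin (N + 1))} {i : Fin N}
    (h : σ i.castSucc < σ i.succ) : invCount (σ * tau i) = invCount σ + 1 := by
  have he1 : (i.castSucc, i.succ) ∈ invSet (σ * tau i) := by
    rw [mem_invSet]
    refine ⟨Fin.castSucc_lt_succ (i := i), ?_⟩
    simp only [perm_mul_apply, tau_castSucc, tau_succ]
    exact h
  have he2 : (i.castSucc, i.succ) ∉ invSet σ := by
    rw [mem_invSet]
    rintro ⟨-, h2⟩
    exact absurd h (not_lt.2 (le_of_lt h2))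
  have h1 : invCount (σ * tau i) = ((invSet (σ * tau i)).erase (i.castSucc, i.succ)).card + 1 := by
    rw [Finset.card_erase_of_mem he1]
    have : 0 < (invSet (σ * tau i)).card := Finset.card_pos.2 ⟨_, he1⟩
    unfold invCount
    omega
  rw [h1, erase_card_eq, Finset.erase_eq_of_notMem he2]
  rfl

lemma invCount_mul_tau_of_gt {σ : Equiv.Perm (Fin (N + 1))} {i : Fin N}
    (h : σ i.succ < σ i.castSucc) : invCount σ = invCount (σ * tau i) + 1 := by
  have key : invCount ((σ * tau i) * tau i) = invCount (σ * tau i) + 1 := by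
    apply invCount_mul_tau_of_lt
    simp only [perm_mul_apply, tau_castSucc, tau_succ]
    exact h
  rwa [mul_assoc, tau_mul_self, mul_one] at key

lemma invCount_inv (σ : Equiv.Perm (Fin (N + 1))) : invCount σ⁻¹ = invCount σ := by
  unfold invCount
  apply Finset.card_bij' (fun p _ => (σ⁻¹ p.2, σ⁻¹ p.1)) (fun p _ => (σ p.2, σ p.1))
  · intro a ha
    rw [mem_invSet] at ha ⊢
    refine ⟨ha.2, ?_⟩
    simp only [Equiv.Perm.coe_inv, Equiv.apply_symm_apply]
    exact ha.1
  · intro a ha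
    rw [mem_invSet] at ha ⊢
    refine ⟨ha.2, ?_⟩
    simp only [Equiv.Perm.coe_inv, Equiv.symm_apply_apply]
    exact ha.1
  · intro a _; simp
  · intro a _; simp

lemma strictMono_of_no_descent {σ : Equiv.Perm (Fin (N + 1))}
    (h : ∀ i : Fin N, σ i.castSucc < σ i.succ) : StrictMono σ :=
  Fin.strictMono_iff_lt_succ.2 h

lemma le_apply_of_strictMono {f : Fin (N+1) → Fin (N+1)} (hf : StrictMono f) :
    ∀ p, p ≤ f p := by
  intro p
  induction p using Fin.induction with
  | zero => exact Fin.zero_le _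
  | succ i ih =>
    have h1 : f i.castSucc < f i.succ := hf (Fin.castSucc_lt_succ (i := i))
    have := lt_of_le_of_lt ih h1
    rwa [Fin.castSucc_lt_iff_succ_le] at this

lemma eq_one_of_no_descent {σ : Equiv.Perm (Fin (N + 1))}
    (h : ∀ i : Fin N, σ i.castSucc < σ i.succ) : σ = 1 := by
  have hsm := strictMono_of_no_descent h
  have hsm' : StrictMono (σ⁻¹ : Equiv.Perm (Fin (N+1))) := by
    intro a b hab
    rcases lt_trichotomy (σ⁻¹ a) (σ⁻¹ b) with h1 | h1 | h1
    · exact h1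
    · exact absurd (congrArg σ h1) (by simp [Equiv.Perm.coe_inv, Equiv.apply_symm_apply]; exact ne_of_lt hab)
    · have := hsm h1
      simp only [Equiv.Perm.coe_inv, Equiv.apply_symm_apply] at this
      exact absurd hab (not_lt.2 (le_of_lt this))
  ext p
  have h1 := le_apply_of_strictMono hsm p
  have h2 := le_apply_of_strictMono hsm' (σ p)
  simp only [Equiv.Perm.coe_inv, Equiv.symm_apply_apply] at h2
  simp only [Equiv.Perm.one_apply]
  exact le_antisymm h2 h1

lemma invCount_one : invCount (1 : Equiv.Perm (Fin (N+1))) = 0 := by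
  unfold invCount invSet
  rw [Finset.card_eq_zero]
  ext p
  simp only [Finset.mem_filter, Finset.mem_univ, true_and, Finset.notMem_empty,
    iff_false, not_and, Equiv.Perm.one_apply]
  intro hp
  have hp' := (Finset.mem_filter.1 hp).2
  exact absurd hp'.2 (not_lt.2 (le_of_lt hp'.1))

lemma exists_word (σ : Equiv.Perm (Fin (N + 1))) :
    ∃ l : List (Fin N), (l.map tau).prod = σ ∧ l.length = invCount σ := by
  generalize hn : invCount σ = n
  induction n using Nat.strong_induction_on generalizing σ with
  | _ n ih =>
    by_cases h : ∀ i : Fin N, σ i.castSucc < σ i.succ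
    · have h1 := eq_one_of_no_descent h
      subst h1
      have h0 := invCount_one (N := N)
      exact ⟨[], by simp, by rw [List.length_nil, ← hn, h0]⟩
    · push_neg at h
      obtain ⟨i, hi⟩ := h
      have hne : σ i.castSucc ≠ σ i.succ :=
        fun hh => (ne_of_lt (Fin.castSucc_lt_succ (i := i))) (σ.injective hh)
      have hgt : σ i.succ < σ i.castSucc := lt_of_le_of_ne hi (Ne.symm hne)
      have hdec := invCount_mul_tau_of_gt hgt
      have hlt : invCount (σ * tau i) < n := by omega
      obtain ⟨l, hl1, hl2⟩ := ih _ hlt (σ * tau i) rfl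
      refine ⟨l ++ [i], ?_, ?_⟩
      · rw [List.map_append, List.prod_append, hl1]
        simp [mul_assoc, tau_mul_self]
      · simp [hl2]; omega

lemma invCount_word_le (l : List (Fin N)) : invCount ((l.map tau).prod) ≤ l.length := by
  induction l using List.reverseRecOn with
  | nil => 
    simp [invCount_one]
  | append_singleton l i ih =>
    rw [List.map_append, List.prod_append]
    simp only [List.map_cons, List.map_nil, List.prod_cons, List.prod_nil, mul_one,
      List.length_append, List.length_cons, List.length_nil]
    set ρ := (l.map tau).prod
    rcases lt_trichotomy (ρ i.castSucc) (ρ i.succ) with hc | hc | hc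
    · have := invCount_mul_tau_of_lt hc
      omega
    · exact absurd (ρ.injective hc) (ne_of_lt (Fin.castSucc_lt_succ (i := i)))
    · have := invCount_mul_tau_of_gt hc
      omega

lemma len_eq_invCount (σ : Equiv.Perm (Fin (N + 1))) : len σ = invCount σ := by
  apply le_antisymm
  · apply Nat.sInf_le
    obtain ⟨l, h1, h2⟩ := exists_word σ
    exact ⟨l, h2, h1⟩
  · apply le_csInf
    · obtain ⟨l, h1, h2⟩ := exists_word σ
      exact ⟨invCount σ, l, h2, h1⟩
    · rintro m ⟨l, hl, hp⟩
      rw [← hp, ← hl]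
      exact invCount_word_le l

lemma exists_reduced (σ : Equiv.Perm (Fin (N + 1))) :
    ∃ l : List (Fin N), (l.map tau).prod = σ ∧ l.length = len σ := by
  obtain ⟨l, h1, h2⟩ := exists_word σ
  exact ⟨l, h1, by rw [h2, len_eq_invCount]⟩

lemma len_le_of_word {σ : Equiv.Perm (Fin (N + 1))} {l : List (Fin N)}
    (h : (l.map tau).prod = σ) : len σ ≤ l.length :=
  Nat.sInf_le ⟨l, rfl, h⟩

lemma len_one : len (1 : Equiv.Perm (Fin (N+1))) = 0 := by
  rw [len_eq_invCount, invCount_one]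

lemma tau_inv (i : Fin N) : (tau i)⁻¹ = tau i := by
  rw [eq_comm, eq_inv_iff_mul_eq_one, tau_mul_self]

lemma len_inv (σ : Equiv.Perm (Fin (N + 1))) : len σ⁻¹ = len σ := by
  rw [len_eq_invCount, len_eq_invCount, invCount_inv]

lemma apply_castSucc_ne (σ : Equiv.Perm (Fin (N + 1))) (i : Fin N) :
    σ i.castSucc ≠ σ i.succ :=
  fun h => (ne_of_lt (Fin.castSucc_lt_succ (i := i))) (σ.injective h)

lemma len_mul_tau_of_lt {σ : Equiv.Perm (Fin (N + 1))} {i : Fin N}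
    (h : σ i.castSucc < σ i.succ) : len (σ * tau i) = len σ + 1 := by
  rw [len_eq_invCount, len_eq_invCount]; exact invCount_mul_tau_of_lt h

lemma len_mul_tau_of_gt {σ : Equiv.Perm (Fin (N + 1))} {i : Fin N}
    (h : σ i.succ < σ i.castSucc) : len σ = len (σ * tau i) + 1 := by
  rw [len_eq_invCount, len_eq_invCount]; exact invCount_mul_tau_of_gt h

lemma len_tau_mul_of_lt {σ : Equiv.Perm (Fin (N + 1))} {j : Fin N}
    (h : σ⁻¹ j.castSucc < σ⁻¹ j.succ) : len (tau j * σ) = len σ + 1 := by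
  have : (tau j * σ)⁻¹ = σ⁻¹ * tau j := by rw [mul_inv_rev, tau_inv]
  rw [← len_inv (tau j * σ), this, len_mul_tau_of_lt h, len_inv]

lemma len_tau_mul_of_gt {σ : Equiv.Perm (Fin (N + 1))} {j : Fin N}
    (h : σ⁻¹ j.succ < σ⁻¹ j.castSucc) : len σ = len (tau j * σ) + 1 := by
  have : (tau j * σ)⁻¹ = σ⁻¹ * tau j := by rw [mul_inv_rev, tau_inv]
  rw [← len_inv (tau j * σ), this, ← len_mul_tau_of_gt h, len_inv]

lemma tau_braid {a b : Fin N} (hab : (a:ℕ) + 1 = b) :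
    tau a * tau b * tau a = tau b * tau a * tau b := by
  have hbc : b.castSucc = a.succ := by
    apply Fin.ext; simp [Fin.val_succ, ← hab]
  have hAB : a.castSucc ≠ a.succ := ne_of_lt (Fin.castSucc_lt_succ (i := a))
  have hBC : a.succ ≠ b.succ := by
    rw [← hbc]; exact ne_of_lt (Fin.castSucc_lt_succ (i := b))
  have hAC : a.castSucc ≠ b.succ := by
    apply Fin.ne_of_val_ne; simp [Fin.val_succ, ← hab]; omega
  unfold tau
  rw [hbc]
  calc Equiv.swap a.castSucc a.succ * Equiv.swap a.succ b.succ * Equiv.swap a.castSucc a.succ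
      = Equiv.swap a.succ a.castSucc * Equiv.swap b.succ a.succ * Equiv.swap a.succ a.castSucc := by
        rw [Equiv.swap_comm a.castSucc a.succ, Equiv.swap_comm a.succ b.succ]
    _ = Equiv.swap a.castSucc b.succ := by
        rw [Equiv.swap_mul_swap_mul_swap hBC.symm hAC.symm]
    _ = Equiv.swap a.succ b.succ * Equiv.swap a.castSucc a.succ * Equiv.swap a.succ b.succ := by
        rw [Equiv.swap_mul_swap_mul_swap hAB hAC, Equiv.swap_comm]

lemma tau_val_cases (i : Fin N) (p : Fin (N+1)) :
    ((p:ℕ) = i ∧ ((tau i p : Fin (N+1)):ℕ) = (i:ℕ)+1) ∨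
    ((p:ℕ) = (i:ℕ)+1 ∧ ((tau i p : Fin (N+1)):ℕ) = i) ∨
    ((p:ℕ) ≠ i ∧ (p:ℕ) ≠ (i:ℕ)+1 ∧ tau i p = p) := by
  by_cases h1 : (p:ℕ) = i
  · left
    have : p = i.castSucc := Fin.ext h1
    subst this
    rw [tau_castSucc]
    exact ⟨h1, rfl⟩
  · by_cases h2 : (p:ℕ) = (i:ℕ)+1
    · right; left
      have : p = i.succ := Fin.ext h2
      subst this
      rw [tau_succ]
      exact ⟨h2, rfl⟩
    · right; right
      refine ⟨h1, h2, tau_apply_of_ne i ?_ ?_⟩ <;> exact Fin.ne_of_val_ne (by simpa)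

lemma tau_comm {a b : Fin N} (h : (a:ℕ) + 1 < b ∨ (b:ℕ) + 1 < a) :
    tau a * tau b = tau b * tau a := by
  apply Equiv.ext
  intro p
  simp only [perm_mul_apply]
  rcases tau_val_cases b p with ⟨hp, him⟩ | ⟨hp, him⟩ | ⟨hp1, hp2, hfix⟩
  · -- p = bc, tau b p has val b+1
    have hfa : tau a p = p := by
      rcases tau_val_cases a p with ⟨h1, _⟩ | ⟨h1, _⟩ | ⟨_, _, h3⟩
      · omega
      · omega
      · exact h3
    rw [hfa]
    rcases tau_val_cases a (tau b p) with ⟨h1, _⟩ | ⟨h1, _⟩ | ⟨_, _, h3⟩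
    · omega
    · omega
    · rw [h3]
  · have hfa : tau a p = p := by
      rcases tau_val_cases a p with ⟨h1, _⟩ | ⟨h1, _⟩ | ⟨_, _, h3⟩
      · omega
      · omega
      · exact h3
    rw [hfa]
    rcases tau_val_cases a (tau b p) with ⟨h1, _⟩ | ⟨h1, _⟩ | ⟨_, _, h3⟩
    · omega
    · omega
    · rw [h3]
  · rw [hfix]
    rcases tau_val_cases a p with ⟨hp, him⟩ | ⟨hp, him⟩ | ⟨_, _, h3⟩
    · rcases tau_val_cases b (tau a p) with ⟨h1, _⟩ | ⟨h1, _⟩ | ⟨_, _, h3⟩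
      · omega
      · omega
      · rw [h3]
    · rcases tau_val_cases b (tau a p) with ⟨h1, _⟩ | ⟨h1, _⟩ | ⟨_, _, h3⟩
      · omega
      · omega
      · rw [h3]
    · rw [h3, hfix]


lemma left_descent_of_len_lt {σ : Equiv.Perm (Fin (N+1))} {a : Fin N}
    (h : len (tau a * σ) < len σ) : σ⁻¹ a.succ < σ⁻¹ a.castSucc := by
  rcases lt_trichotomy (σ⁻¹ a.castSucc) (σ⁻¹ a.succ) with hc | hc | hc
  · have := len_tau_mul_of_lt hc
    omega
  · exact absurd (σ⁻¹.injective hc) (ne_of_lt (Fin.castSucc_lt_succ (i := a)))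
  · exact hc

lemma bcastSucc_eq_asucc {a b : Fin N} (hab : (a:ℕ) + 1 = b) : b.castSucc = a.succ := by
  apply Fin.ext; simp [Fin.val_succ, ← hab]

-- adjacent lifting: descent chain
lemma lift_adj {σ : Equiv.Perm (Fin (N+1))} {a b : Fin N} (hab : (a:ℕ) + 1 = b)
    (h1 : σ⁻¹ a.succ < σ⁻¹ a.castSucc) (h2 : σ⁻¹ b.succ < σ⁻¹ b.castSucc) :
    ((tau a * σ)⁻¹ b.succ < (tau a * σ)⁻¹ b.castSucc) ∧
    ((tau b * (tau a * σ))⁻¹ a.succ < (tau b * (tau a * σ))⁻¹ a.castSucc) := by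
  have hbc := bcastSucc_eq_asucc hab
  have inv1 : (tau a * σ)⁻¹ = σ⁻¹ * tau a := by rw [mul_inv_rev, tau_inv]
  have inv2 : (tau b * (tau a * σ))⁻¹ = σ⁻¹ * tau a * tau b := by
    rw [mul_inv_rev, inv1, tau_inv, mul_assoc]
  have hfix_bs : tau a b.succ = b.succ := by
    apply tau_apply_of_ne <;> (apply Fin.ne_of_val_ne; simp [Fin.val_succ]; omega)
  have hfix_ac : tau b a.castSucc = a.castSucc := by
    apply tau_apply_of_ne <;> (apply Fin.ne_of_val_ne; simp [Fin.val_succ]; omega)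
  constructor
  · rw [inv1]
    simp only [perm_mul_apply]
    rw [hfix_bs, hbc, tau_succ]
    calc σ⁻¹ b.succ < σ⁻¹ b.castSucc := h2
      _ = σ⁻¹ a.succ := by rw [hbc]
      _ < σ⁻¹ a.castSucc := h1
  · rw [inv2]
    simp only [perm_mul_apply]
    rw [← hbc, tau_castSucc, hfix_bs, hfix_ac, tau_castSucc]
    rw [hbc] at h2
    exact h2

lemma lift_comm {σ : Equiv.Perm (Fin (N+1))} {a b : Fin N}
    (hab : (a:ℕ) + 1 < b ∨ (b:ℕ) + 1 < a)
    (h2 : σ⁻¹ b.succ < σ⁻¹ b.castSucc) :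
    (tau a * σ)⁻¹ b.succ < (tau a * σ)⁻¹ b.castSucc := by
  have inv1 : (tau a * σ)⁻¹ = σ⁻¹ * tau a := by rw [mul_inv_rev, tau_inv]
  have hf1 : tau a b.succ = b.succ := by
    apply tau_apply_of_ne <;> (apply Fin.ne_of_val_ne; simp [Fin.val_succ]; omega)
  have hf2 : tau a b.castSucc = b.castSucc := by
    apply tau_apply_of_ne <;> (apply Fin.ne_of_val_ne; simp [Fin.val_succ]; omega)
  rw [inv1]
  simp only [perm_mul_apply]
  rw [hf1, hf2]
  exact h2

lemma len_tau_mul_ge (j : Fin N) (σ : Equiv.Perm (Fin (N+1))) :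
    len σ ≤ len (tau j * σ) + 1 := by
  obtain ⟨r, hr, hrl⟩ := exists_reduced (tau j * σ)
  have : ((j :: r).map tau).prod = σ := by
    simp only [List.map_cons, List.prod_cons]
    rw [hr, ← mul_assoc, tau_mul_self, one_mul]
  have := len_le_of_word this
  simpa [hrl] using this

lemma len_mul_tau_ge (i : Fin N) (σ : Equiv.Perm (Fin (N+1))) :
    len σ ≤ len (σ * tau i) + 1 := by
  obtain ⟨r, hr, hrl⟩ := exists_reduced (σ * tau i)
  have : ((r ++ [i]).map tau).prod = σ := by
    rw [List.map_append, List.prod_append, hr]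
    simp [mul_assoc, tau_mul_self]
  have := len_le_of_word this
  simp only [List.length_append, List.length_cons, List.length_nil, hrl] at this
  omega

lemma self_cancel (i : Fin N) (x : Equiv.Perm (Fin (N+1))) : tau i * (tau i * x) = x := by
  rw [← mul_assoc, tau_mul_self, one_mul]

lemma braid_apply {a b : Fin N} (hab : (a:ℕ) + 1 = b) (x : Equiv.Perm (Fin (N+1))) :
    tau a * (tau b * (tau a * x)) = tau b * (tau a * (tau b * x)) := by
  simp only [← mul_assoc]
  rw [tau_braid hab]

variable {M : Type} [AddCommGroup M] [Module k M]

lemma end_braid_apply {q : k} {T : Fin N → Module.End k M} (hT : IsHeckeRep q T)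
    {a b : Fin N} (hab : (a:ℕ) + 1 = b ∨ (b:ℕ) + 1 = a) (x : Module.End k M) :
    T a * (T b * (T a * x)) = T b * (T a * (T b * x)) := by
  simp only [← mul_assoc]
  rw [hT.1 a b hab]

lemma adj_case {q : k} {T : Fin N → Module.End k M} (hT : IsHeckeRep q T) {n : ℕ}
    (ih : ∀ m, m < n → ∀ σ : Equiv.Perm (Fin (N+1)), len σ = m →
      ∀ l l' : List (Fin N), (l.map tau).prod = σ → l.length = m →
        (l'.map tau).prod = σ → l'.length = m → (l.map T).prod = (l'.map T).prod)
    {σ : Equiv.Perm (Fin (N+1))} (hσ : len σ = n) {a b : Fin N} (hab : (a:ℕ) + 1 = b)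
    {t t' : List (Fin N)}
    (hta : (t.map tau).prod = tau a * σ) (hlta : t.length + 1 = n)
    (htb : (t'.map tau).prod = tau b * σ) (hltb : t'.length + 1 = n) :
    (((a :: t).map T).prod = ((b :: t').map T).prod) := by
  have hlena : len (tau a * σ) = n - 1 := by
    have h1 := len_le_of_word hta
    have h2 := len_tau_mul_ge a σ
    omega
  have hlenb : len (tau b * σ) = n - 1 := by
    have h1 := len_le_of_word htb
    have h2 := len_tau_mul_ge b σ
    omega
  have ha : σ⁻¹ a.succ < σ⁻¹ a.castSucc :=
    left_descent_of_len_lt (by omega)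
  have hb : σ⁻¹ b.succ < σ⁻¹ b.castSucc :=
    left_descent_of_len_lt (by omega)
  obtain ⟨d1, d2⟩ := lift_adj hab ha hb
  have hlen2 : len (tau a * σ) = len (tau b * (tau a * σ)) + 1 := len_tau_mul_of_gt d1
  have hlen3 : len (tau b * (tau a * σ)) = len (tau a * (tau b * (tau a * σ))) + 1 :=
    len_tau_mul_of_gt d2
  set w := tau a * (tau b * (tau a * σ)) with hw
  obtain ⟨r, hr, hrl⟩ := exists_reduced w
  -- word b::a::r for tau a * σ
  have hw1 : (((b :: a :: r).map tau).prod) = tau a * σ := by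
    simp only [List.map_cons, List.prod_cons]
    rw [hr, hw, self_cancel, self_cancel]
  have hw1l : (b :: a :: r).length = n - 1 := by
    simp only [List.length_cons, hrl]
    omega
  -- word a::b::r for tau b * σ
  have hw2 : (((a :: b :: r).map tau).prod) = tau b * σ := by
    simp only [List.map_cons, List.prod_cons]
    rw [hr, hw]
    rw [braid_apply hab (tau b * (tau a * σ)), self_cancel, self_cancel]
  have hw2l : (a :: b :: r).length = n - 1 := by
    simp only [List.length_cons, hrl]
    omega
  have e1 := ih (n-1) (by omega) (tau a * σ) hlena t (b :: a :: r) hta (by omega) hw1 hw1l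
  have e2 := ih (n-1) (by omega) (tau b * σ) hlenb t' (a :: b :: r) htb (by omega) hw2 hw2l
  simp only [List.map_cons, List.prod_cons] at e1 e2 ⊢
  rw [e1, e2, end_braid_apply hT (Or.inl hab)]

theorem word_prod_eq {q : k} {T : Fin N → Module.End k M} (hT : IsHeckeRep q T) :
    ∀ n : ℕ, ∀ σ : Equiv.Perm (Fin (N+1)), len σ = n →
      ∀ l l' : List (Fin N), (l.map tau).prod = σ → l.length = n →
        (l'.map tau).prod = σ → l'.length = n →
        (l.map T).prod = (l'.map T).prod := by
  intro n
  induction n using Nat.strong_induction_on with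
  | _ n ih =>
    intro σ hσ l l' hl hll hl' hll'
    match l, l' with
    | [], [] => rfl
    | [], b :: t' => simp only [List.length_nil, List.length_cons] at hll hll'; omega
    | a :: t, [] => simp only [List.length_nil, List.length_cons] at hll hll'; omega
    | a :: t, b :: t' =>
      simp only [List.length_cons] at hll hll'
      have hta : (t.map tau).prod = tau a * σ := by
        rw [← hl]; simp only [List.map_cons, List.prod_cons, self_cancel]
      have htb : (t'.map tau).prod = tau b * σ := by
        rw [← hl']; simp only [List.map_cons, List.prod_cons, self_cancel]
      by_cases hab : a = b
      · subst hab
        have hlena : len (tau a * σ) = n - 1 := by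
          have h1 := len_le_of_word hta
          have h2 := len_tau_mul_ge a σ
          omega
        have e := ih (n-1) (by omega) (tau a * σ) hlena t t' hta (by omega) htb (by omega)
        simp only [List.map_cons, List.prod_cons, e]
      · have hvne : (a:ℕ) ≠ (b:ℕ) := fun h => hab (Fin.ext h)
        rcases (by omega : (a:ℕ) + 1 = b ∨ (b:ℕ) + 1 = a ∨ ((a:ℕ)+1 < b ∨ (b:ℕ)+1 < a)) with
          hcase | hcase | hcase
        · exact adj_case hT ih hσ hcase hta hll htb hll'
        · exact (adj_case hT ih hσ hcase htb hll' hta hll).symm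
        · -- commuting case
          have hlena : len (tau a * σ) = n - 1 := by
            have h1 := len_le_of_word hta
            have h2 := len_tau_mul_ge a σ
            omega
          have hlenb : len (tau b * σ) = n - 1 := by
            have h1 := len_le_of_word htb
            have h2 := len_tau_mul_ge b σ
            omega
          have hb : σ⁻¹ b.succ < σ⁻¹ b.castSucc := left_descent_of_len_lt (by omega)
          have d1 := lift_comm hcase hb
          have hlen2 : len (tau a * σ) = len (tau b * (tau a * σ)) + 1 := len_tau_mul_of_gt d1
          set w := tau b * (tau a * σ) with hw
          obtain ⟨r, hr, hrl⟩ := exists_reduced w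
          have hcg : tau a * tau b = tau b * tau a := tau_comm hcase
          have hw1 : ((b :: r).map tau).prod = tau a * σ := by
            simp only [List.map_cons, List.prod_cons]
            rw [hr, hw, self_cancel]
          have hw2 : ((a :: r).map tau).prod = tau b * σ := by
            simp only [List.map_cons, List.prod_cons]
            rw [hr, hw, ← mul_assoc, hcg, mul_assoc, self_cancel]
          have e1 := ih (n-1) (by omega) (tau a * σ) hlena t (b :: r) hta (by omega) hw1
            (by simp only [List.length_cons, hrl]; omega)
          have e2 := ih (n-1) (by omega) (tau b * σ) hlenb t' (a :: r) htb (by omega) hw2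
            (by simp only [List.length_cons, hrl]; omega)
          simp only [List.map_cons, List.prod_cons] at e1 e2 ⊢
          rw [e1, e2, ← mul_assoc, ← mul_assoc, hT.2.1 a b hcase]

lemma Tperm_eq_of_reduced {q : k} {T : Fin N → Module.End k M} (hT : IsHeckeRep q T)
    {σ : Equiv.Perm (Fin (N+1))} {l : List (Fin N)}
    (h1 : (l.map tau).prod = σ) (h2 : l.length = len σ) :
    (l.map T).prod = Tperm T σ := by
  unfold Tperm
  have hex : ∃ l : List (Fin N), (l.map tau).prod = σ ∧ l.length = len σ := ⟨l, h1, h2⟩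
  rw [dif_pos hex]
  exact word_prod_eq hT (len σ) σ rfl l hex.choose h1 h2 hex.choose_spec.1 hex.choose_spec.2

lemma Tperm_tau_mul {q : k} {T : Fin N → Module.End k M} (hT : IsHeckeRep q T)
    {σ : Equiv.Perm (Fin (N+1))} {j : Fin N} (h : len (tau j * σ) = len σ + 1) :
    Tperm T (tau j * σ) = T j * Tperm T σ := by
  obtain ⟨l, h1, h2⟩ := exists_reduced σ
  have hw : (((j :: l)).map tau).prod = tau j * σ := by
    simp only [List.map_cons, List.prod_cons, h1]
  have hwl : (j :: l).length = len (tau j * σ) := by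
    simp only [List.length_cons, h2, h]
  rw [← Tperm_eq_of_reduced hT hw hwl, ← Tperm_eq_of_reduced hT h1 h2]
  simp only [List.map_cons, List.prod_cons]

lemma Tperm_mul_tau {q : k} {T : Fin N → Module.End k M} (hT : IsHeckeRep q T)
    {σ : Equiv.Perm (Fin (N+1))} {i : Fin N} (h : len (σ * tau i) = len σ + 1) :
    Tperm T (σ * tau i) = Tperm T σ * T i := by
  obtain ⟨l, h1, h2⟩ := exists_reduced σ
  have hw : ((l ++ [i]).map tau).prod = σ * tau i := by
    rw [List.map_append, List.prod_append, h1]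
    simp
  have hwl : (l ++ [i]).length = len (σ * tau i) := by
    simp only [List.length_append, List.length_cons, List.length_nil, h2, h]
  rw [← Tperm_eq_of_reduced hT hw hwl, ← Tperm_eq_of_reduced hT h1 h2]
  rw [List.map_append, List.prod_append]
  simp

def brel (B : Set (Fin N)) (p q : Fin (N+1)) : Prop :=
  ∀ i : Fin N, ((p:ℕ) ≤ (i:ℕ) ∧ (i:ℕ) + 1 ≤ (q:ℕ)) ∨ ((q:ℕ) ≤ (i:ℕ) ∧ (i:ℕ) + 1 ≤ (p:ℕ)) → i ∈ B

lemma brel_refl (B : Set (Fin N)) (p : Fin (N+1)) : brel B p p := by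
  rintro i (⟨h1, h2⟩ | ⟨h1, h2⟩) <;> omega

lemma brel_symm {B : Set (Fin N)} {p q : Fin (N+1)} (h : brel B p q) : brel B q p := by
  rintro i (hi | hi)
  · exact h i (Or.inr hi)
  · exact h i (Or.inl hi)

lemma brel_trans {B : Set (Fin N)} {p q r : Fin (N+1)}
    (h1 : brel B p q) (h2 : brel B q r) : brel B p r := by
  rintro i (⟨ha, hb⟩ | ⟨ha, hb⟩)
  · by_cases hq : (q:ℕ) ≤ (i:ℕ)
    · exact h2 i (by omega)
    · exact h1 i (by omega)
  · by_cases hq : (q:ℕ) ≤ (i:ℕ)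
    · exact h1 i (by omega)
    · exact h2 i (by omega)

lemma tau_mem_young {B : Set (Fin N)} {i : Fin N} (hi : i ∈ B) :
    tau i ∈ youngSubgroup B :=
  Subgroup.subset_closure ⟨i, hi, rfl⟩

lemma brel_apply_of_mem_young {B : Set (Fin N)} {u : Equiv.Perm (Fin (N+1))}
    (hu : u ∈ youngSubgroup B) : ∀ p, brel B p (u p) := by
  induction hu using Subgroup.closure_induction with
  | mem s hs =>
    obtain ⟨i, hiB, rfl⟩ := hs
    intro p
    rcases tau_val_cases i p with ⟨hp, him⟩ | ⟨hp, him⟩ | ⟨_, _, hfix⟩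
    · rintro e (⟨h1, h2⟩ | ⟨h1, h2⟩) <;>
        · have : (e:ℕ) = (i:ℕ) := by omega
          exact (Fin.ext this : e = i) ▸ hiB
    · rintro e (⟨h1, h2⟩ | ⟨h1, h2⟩) <;>
        · have : (e:ℕ) = (i:ℕ) := by omega
          exact (Fin.ext this : e = i) ▸ hiB
    · rw [hfix]
      exact brel_refl B p
  | one => intro p; simpa using brel_refl B p
  | mul u v _ _ hu hv =>
    intro p
    have h1 := hv p
    have h2 := hu (v p)
    have he : (u * v) p = u (v p) := rfl
    rw [he]
    exact brel_trans h1 h2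
  | inv u _ hu =>
    intro p
    have h1 := hu (u⁻¹ p)
    simp only [Equiv.Perm.coe_inv, Equiv.apply_symm_apply] at h1
    exact brel_symm h1

lemma increasing_on_block {B : Set (Fin N)} {σ : Equiv.Perm (Fin (N+1))}
    (hσ : ∀ i ∈ B, σ i.castSucc < σ i.succ) :
    ∀ d : ℕ, ∀ p q : Fin (N+1), (q:ℕ) = (p:ℕ) + d → brel B p q → p < q → σ p < σ q := by
  intro d
  induction d with
  | zero => intro p q hq _ hlt; rw [Fin.lt_def] at hlt; omega
  | succ d ihd =>
    intro p q hq hrel hlt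
    have hqN : (q:ℕ) < N + 1 := q.isLt
    have hltv : (p:ℕ) < (q:ℕ) := Fin.lt_def.1 hlt
    have hpN : (p:ℕ) < N := by omega
    set i : Fin N := ⟨(p:ℕ), hpN⟩ with hi
    have hiv : (i:ℕ) = (p:ℕ) := rfl
    have hics : i.castSucc = p := Fin.ext rfl
    have hisv : ((i.succ : Fin (N+1)):ℕ) = (p:ℕ) + 1 := rfl
    have hiB : i ∈ B := hrel i (Or.inl (by omega))
    have hstep : σ p < σ i.succ := by
      rw [← hics]; exact hσ i hiB
    rcases Nat.eq_zero_or_pos d with hd | hd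
    · have : q = i.succ := Fin.ext (by rw [hisv]; omega)
      rw [this]; exact hstep
    · have hrel2 : brel B i.succ q := by
        rintro e (⟨h1, h2⟩ | ⟨h1, h2⟩) <;> rw [hisv] at * <;> exact hrel e (by omega)
      have hlt2 : i.succ < q := Fin.lt_def.2 (by rw [hisv]; omega)
      have := ihd i.succ q (by rw [hisv]; omega) hrel2 hlt2
      exact lt_trans hstep this

lemma isDistL_of_no_descent {B : Set (Fin N)} {σ : Equiv.Perm (Fin (N+1))}
    (h : ∀ i ∈ B, σ i.castSucc < σ i.succ) : IsDistL B σ := by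
  intro u hu
  rw [len_eq_invCount, len_eq_invCount]
  apply Finset.card_le_card_of_injOn (fun p => (u⁻¹ p.1, u⁻¹ p.2))
  · intro a ha
    rw [Finset.mem_coe, mem_invSet] at ha
    rw [Finset.mem_coe, mem_invSet]
    obtain ⟨hlt, hinv⟩ := ha
    have horder : u⁻¹ a.1 < u⁻¹ a.2 := by
      rcases lt_trichotomy (u⁻¹ a.1) (u⁻¹ a.2) with hc | hc | hc
      · exact hc
      · exact absurd (u⁻¹.injective hc) (ne_of_lt hlt)
      · -- derive contradiction
        exfalso
        set x := u⁻¹ a.2 with hx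
        set y := u⁻¹ a.1 with hy
        have hux : u x = a.2 := by rw [hx]; simp
        have huy : u y = a.1 := by rw [hy]; simp
        have hbx : brel B x a.2 := by rw [← hux]; exact brel_apply_of_mem_young hu x
        have hby : brel B y a.1 := by rw [← huy]; exact brel_apply_of_mem_young hu y
        have hxy : brel B x y := by
          rintro e he
          rcases he with ⟨h1, h2⟩ | ⟨h1, h2⟩
          · -- x ≤ e, e+1 ≤ y
            by_cases hq : (a.2:ℕ) ≤ (e:ℕ)
            · -- use hby : need a.1 ≤ e ∨ ...
              by_cases hp : ((a.1:ℕ)) ≤ (e:ℕ)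
              · exact hby e (by omega)
              · -- e < a.1 and a.2 ≤ e gives a.2 < a.1 contradiction with hlt
                exact absurd (Fin.lt_def.1 hlt) (by omega)
            · exact hbx e (by omega)
          · -- y ≤ e, e+1 ≤ x : but x < y from hc
            have := Fin.lt_def.1 hc
            omega
        have hrel12 : brel B a.1 a.2 := by
          have t1 : brel B a.1 y := brel_symm hby
          have t2 : brel B y x := brel_symm hxy
          have t3 : brel B x a.2 := hbx
          exact brel_trans (brel_trans t1 t2) t3
        have := increasing_on_block h ((a.2:ℕ) - (a.1:ℕ)) a.1 a.2
          (by have := Fin.lt_def.1 hlt; omega) hrel12 hlt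
        exact absurd hinv (not_lt.2 (le_of_lt this))
    refine ⟨horder, ?_⟩
    simp only [perm_mul_apply, Equiv.Perm.coe_inv, Equiv.apply_symm_apply]
    exact hinv
  · intro a _ b _ hab
    have h1 : u⁻¹ a.1 = u⁻¹ b.1 := congrArg Prod.fst hab
    have h2 : u⁻¹ a.2 = u⁻¹ b.2 := congrArg Prod.snd hab
    exact Prod.ext (u⁻¹.injective h1) (u⁻¹.injective h2)

lemma isDistL_iff {B : Set (Fin N)} {σ : Equiv.Perm (Fin (N+1))} :
    IsDistL B σ ↔ ∀ i ∈ B, σ i.castSucc < σ i.succ := by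
  constructor
  · intro hD i hi
    have h1 := hD (tau i) (tau_mem_young hi)
    rcases lt_trichotomy (σ i.castSucc) (σ i.succ) with hc | hc | hc
    · exact hc
    · exact absurd (σ.injective hc) (ne_of_lt (Fin.castSucc_lt_succ (i := i)))
    · have := len_mul_tau_of_gt hc
      omega
  · exact isDistL_of_no_descent

lemma isDistR_iff {B : Set (Fin N)} {σ : Equiv.Perm (Fin (N+1))} :
    IsDistR B σ ↔ ∀ i ∈ B, σ⁻¹ i.castSucc < σ⁻¹ i.succ := by
  constructor
  · intro hD i hi
    have h1 := hD (tau i) (tau_mem_young hi)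
    rcases lt_trichotomy (σ⁻¹ i.castSucc) (σ⁻¹ i.succ) with hc | hc | hc
    · exact hc
    · exact absurd (σ⁻¹.injective hc) (ne_of_lt (Fin.castSucc_lt_succ (i := i)))
    · have := len_tau_mul_of_gt hc
      omega
  · intro h s hs
    have hL : IsDistL B σ⁻¹ := isDistL_of_no_descent h
    have h2 := hL s⁻¹ (inv_mem hs)
    calc len σ = len σ⁻¹ := (len_inv σ).symm
      _ ≤ len (σ⁻¹ * s⁻¹) := h2
      _ = len (s * σ) := by rw [← mul_inv_rev, len_inv]

lemma dichotomy_L {Bl : Set (Fin N)} {σ : Equiv.Perm (Fin (N+1))}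
    (hσ : IsDistL Bl σ) (j : Fin N) :
    IsDistL Bl (tau j * σ) ∨
    ∃ i ∈ Bl, tau j * σ = σ * tau i ∧ σ i.castSucc = j.castSucc ∧ σ i.succ = j.succ := by
  by_cases hd : ∀ i ∈ Bl, (tau j * σ) i.castSucc < (tau j * σ) i.succ
  · left; exact isDistL_of_no_descent hd
  · right
    push_neg at hd
    obtain ⟨i, hiB, hge⟩ := hd
    have hinc : σ i.castSucc < σ i.succ := isDistL_iff.1 hσ i hiB
    have hc1 : σ i.castSucc = j.castSucc ∧ σ i.succ = j.succ := by
      by_contra hcon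
      have hlt := tau_lt_tau hinc hcon
      rw [perm_mul_apply, perm_mul_apply] at hge
      exact absurd hlt (not_lt.2 hge)
    obtain ⟨hcs, hss⟩ := hc1
    refine ⟨i, hiB, ?_, hcs, hss⟩
    apply Equiv.ext
    intro p
    rw [perm_mul_apply, perm_mul_apply]
    rcases tau_val_cases i p with ⟨hp, him⟩ | ⟨hp, him⟩ | ⟨hp1, hp2, hfix⟩
    · have hpe : p = i.castSucc := Fin.ext hp
      rw [hpe, hcs, tau_castSucc j, tau_castSucc i, hss]
    · have hpe : p = i.succ := Fin.ext hp
      rw [hpe, hss, tau_succ j, tau_succ i, hcs]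
    · rw [hfix]
      apply tau_apply_of_ne
      · intro hcon
        rw [← hcs] at hcon
        have := σ.injective hcon
        rw [this] at hp1
        exact hp1 rfl
      · intro hcon
        rw [← hss] at hcon
        have := σ.injective hcon
        rw [this] at hp2
        simp [Fin.val_succ] at hp2

lemma dichotomy_R {Bl : Set (Fin N)} {σ : Equiv.Perm (Fin (N+1))}
    (hσ : IsDistR Bl σ) (j : Fin N) :
    IsDistR Bl (σ * tau j) ∨
    ∃ i ∈ Bl, σ * tau j = tau i * σ ∧ σ⁻¹ i.castSucc = j.castSucc ∧ σ⁻¹ i.succ = j.succ := by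
  have hL : IsDistL Bl σ⁻¹ := isDistL_iff.2 (isDistR_iff.1 hσ)
  have hinv : (σ * tau j)⁻¹ = tau j * σ⁻¹ := by rw [mul_inv_rev, tau_inv]
  rcases dichotomy_L hL j with hc | ⟨i, hiB, heq, hcs, hss⟩
  · left
    rw [isDistR_iff]
    intro i hi
    rw [hinv]
    exact isDistL_iff.1 hc i hi
  · right
    refine ⟨i, hiB, ?_, hcs, hss⟩
    have := congrArg (·⁻¹) heq
    simp only [mul_inv_rev, tau_inv, inv_inv] at this
    exact this

lemma len_tau_mul_lt_or (j : Fin N) (σ : Equiv.Perm (Fin (N+1))) :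
    len (tau j * σ) = len σ + 1 ∨ len σ = len (tau j * σ) + 1 := by
  rcases lt_trichotomy (σ⁻¹ j.castSucc) (σ⁻¹ j.succ) with hc | hc | hc
  · exact Or.inl (len_tau_mul_of_lt hc)
  · exact absurd (σ⁻¹.injective hc) (ne_of_lt (Fin.castSucc_lt_succ (i := j)))
  · exact Or.inr (len_tau_mul_of_gt hc)

lemma len_mul_tau_lt_or (j : Fin N) (σ : Equiv.Perm (Fin (N+1))) :
    len (σ * tau j) = len σ + 1 ∨ len σ = len (σ * tau j) + 1 := by
  rcases lt_trichotomy (σ j.castSucc) (σ j.succ) with hc | hc | hc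
  · exact Or.inl (len_mul_tau_of_lt hc)
  · exact absurd (σ.injective hc) (ne_of_lt (Fin.castSucc_lt_succ (i := j)))
  · exact Or.inr (len_mul_tau_of_gt hc)

lemma caseB_len_L {σ : Equiv.Perm (Fin (N+1))} {i j : Fin N}
    (hcs : σ i.castSucc = j.castSucc) (hss : σ i.succ = j.succ) :
    len (tau j * σ) = len σ + 1 := by
  apply len_tau_mul_of_lt
  have h1 : σ⁻¹ j.castSucc = i.castSucc := by rw [← hcs]; simp
  have h2 : σ⁻¹ j.succ = i.succ := by rw [← hss]; simp
  rw [h1, h2]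
  exact Fin.castSucc_lt_succ (i := i)

lemma caseB_len_R {σ : Equiv.Perm (Fin (N+1))} {i j : Fin N}
    (hcs : σ⁻¹ i.castSucc = j.castSucc) (hss : σ⁻¹ i.succ = j.succ) :
    len (σ * tau j) = len σ + 1 := by
  apply len_mul_tau_of_lt
  have h1 : σ j.castSucc = i.castSucc := by rw [← hcs]; simp
  have h2 : σ j.succ = i.succ := by rw [← hss]; simp
  rw [h1, h2]
  exact Fin.castSucc_lt_succ (i := i)

variable {q : k} {T : Fin N → Module.End k M}

lemma caseB_op_L (hT : IsHeckeRep q T) {σ : Equiv.Perm (Fin (N+1))} {i j : Fin N}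
    (heq : tau j * σ = σ * tau i) (hlen : len (tau j * σ) = len σ + 1) :
    T j * Tperm T σ = Tperm T σ * T i := by
  have h2 : len (σ * tau i) = len σ + 1 := by rw [← heq]; exact hlen
  calc T j * Tperm T σ = Tperm T (tau j * σ) := (Tperm_tau_mul hT hlen).symm
    _ = Tperm T (σ * tau i) := by rw [heq]
    _ = Tperm T σ * T i := Tperm_mul_tau hT h2

lemma caseB_op_R (hT : IsHeckeRep q T) {σ : Equiv.Perm (Fin (N+1))} {i j : Fin N}
    (heq : σ * tau j = tau i * σ) (hlen : len (σ * tau j) = len σ + 1) :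
    Tperm T σ * T j = T i * Tperm T σ := by
  have h2 : len (tau i * σ) = len σ + 1 := by rw [← heq]; exact hlen
  calc Tperm T σ * T j = Tperm T (σ * tau j) := (Tperm_mul_tau hT hlen).symm
    _ = Tperm T (tau i * σ) := by rw [heq]
    _ = T i * Tperm T σ := Tperm_tau_mul hT h2

lemma len_le_bound (σ : Equiv.Perm (Fin (N+1))) : len σ ≤ (N+1) * (N+1) := by
  rw [len_eq_invCount]
  calc (invSet σ).card ≤ (Finset.univ : Finset (Fin (N+1) × Fin (N+1))).card :=
      Finset.card_le_card (Finset.filter_subset _ _)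
    _ = (N+1) * (N+1) := by simp

lemma quad_op (hT : IsHeckeRep q T) (j : Fin N) :
    T j * (T j + 1) = q • (T j + 1) := by
  have h := hT.2.2 j
  have hexp : (T j - q • 1) * (T j + 1)
      = T j * (T j + 1) - q • (T j + 1) := by
    rw [sub_mul, smul_mul_assoc, one_mul]
  rw [hexp] at h
  rw [sub_eq_zero] at h
  exact h

lemma decomp_L (hT : IsHeckeRep q T) (Bl Bm : Set (Fin N)) (hBB : Bl ⊆ Bm)
    (j : Fin N) (hj : j ∈ Bm) :
    ∃ A C : Finset (Equiv.Perm (Fin (N+1))),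
      (∀ σ ∈ C, ∃ i ∈ Bl, T j * Tperm T σ = Tperm T σ * T i) ∧
      (∑ σ : Equiv.Perm (Fin (N + 1)),
        if σ ∈ youngSubgroup Bm ∧ IsDistL Bl σ then Tperm T σ else 0)
        = (∑ σ ∈ A, (T j + 1) * Tperm T σ) + ∑ σ ∈ C, Tperm T σ := by
  classical
  set P : Equiv.Perm (Fin (N+1)) → Prop :=
    fun σ => σ ∈ youngSubgroup Bm ∧ IsDistL Bl σ with hP
  set D : Finset (Equiv.Perm (Fin (N+1))) := Finset.univ.filter P with hD
  set E : Finset (Equiv.Perm (Fin (N+1))) := D.filter (fun σ => P (tau j * σ)) with hE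
  set C : Finset (Equiv.Perm (Fin (N+1))) := D.filter (fun σ => ¬ P (tau j * σ)) with hC
  set A : Finset (Equiv.Perm (Fin (N+1))) :=
    E.filter (fun σ => len (tau j * σ) = len σ + 1) with hA
  set A' : Finset (Equiv.Perm (Fin (N+1))) :=
    E.filter (fun σ => ¬ len (tau j * σ) = len σ + 1) with hA'
  refine ⟨A, C, ?_, ?_⟩
  · intro σ hσ
    rw [hC, Finset.mem_filter, hD, Finset.mem_filter] at hσ
    obtain ⟨⟨-, hPσ⟩, hnP⟩ := hσ
    rcases dichotomy_L hPσ.2 j with hc | ⟨i, hiB, heq, hcs, hss⟩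
    · exfalso
      exact hnP ⟨Subgroup.mul_mem _ (tau_mem_young hj) hPσ.1, hc⟩
    · exact ⟨i, hiB, caseB_op_L hT heq (caseB_len_L hcs hss)⟩
  · have h1 : (∑ σ : Equiv.Perm (Fin (N + 1)),
        if σ ∈ youngSubgroup Bm ∧ IsDistL Bl σ then Tperm T σ else 0)
        = ∑ σ ∈ D, Tperm T σ := by
      rw [hD, Finset.sum_filter]
    rw [h1]
    have h2 : ∑ σ ∈ D, Tperm T σ = (∑ σ ∈ E, Tperm T σ) + ∑ σ ∈ C, Tperm T σ := by
      rw [hE, hC]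
      exact (Finset.sum_filter_add_sum_filter_not D _ _).symm
    rw [h2]
    have h3 : ∑ σ ∈ E, Tperm T σ = (∑ σ ∈ A, Tperm T σ) + ∑ σ ∈ A', Tperm T σ := by
      rw [hA, hA']
      exact (Finset.sum_filter_add_sum_filter_not E _ _).symm
    have hA'img : A' = A.image (fun σ => tau j * σ) := by
      ext σ
      simp only [hA', hA, hE, hD, Finset.mem_image, Finset.mem_filter, Finset.mem_univ, true_and]
      constructor
      · rintro ⟨⟨hPσ, hPτσ⟩, hnup⟩
        have hdown : len σ = len (tau j * σ) + 1 :=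
          (len_tau_mul_lt_or j σ).resolve_left hnup
        refine ⟨tau j * σ, ⟨⟨hPτσ, ?_⟩, ?_⟩, self_cancel j σ⟩
        · rw [self_cancel]; exact hPσ
        · rw [self_cancel]; omega
      · rintro ⟨σ₀, ⟨⟨⟨hPσ₀, hPτσ₀⟩, hup⟩, rfl⟩⟩
        rw [self_cancel]
        refine ⟨⟨hPτσ₀, hPσ₀⟩, ?_⟩
        omega
    have h4 : ∑ σ ∈ A', Tperm T σ = ∑ σ ∈ A, Tperm T (tau j * σ) := by
      rw [hA'img]
      apply Finset.sum_image
      intro a _ b _ hab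
      exact mul_left_cancel hab
    have h5 : ∀ σ ∈ A, Tperm T (tau j * σ) = T j * Tperm T σ := by
      intro σ hσ
      rw [hA, Finset.mem_filter] at hσ
      exact Tperm_tau_mul hT hσ.2
    rw [h3, h4, Finset.sum_congr rfl h5, ← Finset.sum_add_distrib]
    congr 1
    apply Finset.sum_congr rfl
    intro σ _
    rw [add_mul, one_mul, add_comm]

lemma pair_combine (q : k) {L m : ℕ} (hLm : L + 1 ≤ m) (X Y : Module.End k M) :
    ((-1:k)^L * q^(m-L)) • X + ((-1:k)^(L+1) * q^(m-(L+1))) • (X * Y)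
      = ((-1:k)^L * q^(m-L-1)) • (X * (q • 1 - Y)) := by
  obtain ⟨n, hn⟩ : ∃ n, m - L - 1 = n := ⟨_, rfl⟩
  have e1 : X * (q • 1 - Y) = q • X - X * Y := by
    rw [mul_sub, mul_smul_comm, mul_one]
  rw [show m - (L+1) = n from by omega, show m - L - 1 = n from hn,
    show m - L = n + 1 from by omega, e1]
  match_scalars <;> ring

lemma self_cancel_right (j : Fin N) (σ : Equiv.Perm (Fin (N+1))) :
    (σ * tau j) * tau j = σ := by
  rw [mul_assoc, tau_mul_self, mul_one]

lemma decomp_R (hT : IsHeckeRep q T) (Bl Bm : Set (Fin N)) (hBB : Bl ⊆ Bm)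
    (j : Fin N) (hj : j ∈ Bm) (m : ℕ)
    (hm : m = sSup {r | ∃ σ, σ ∈ youngSubgroup Bm ∧ IsDistR Bl σ ∧ len σ = r}) :
    ∃ A C : Finset (Equiv.Perm (Fin (N+1))),
      (∀ σ ∈ C, ∃ i ∈ Bl, Tperm T σ * T j = T i * Tperm T σ) ∧
      (∑ σ : Equiv.Perm (Fin (N + 1)),
        if σ ∈ youngSubgroup Bm ∧ IsDistR Bl σ then
          ((-1 : k) ^ len σ * q ^ (m - len σ)) • Tperm T σ else 0)
        = (∑ σ ∈ A, ((-1:k)^len σ * q^(m - len σ - 1)) • (Tperm T σ * (q • 1 - T j)))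
          + ∑ σ ∈ C, ((-1:k)^len σ * q^(m - len σ)) • Tperm T σ := by
  classical
  set f : Equiv.Perm (Fin (N+1)) → Module.End k M :=
    fun σ => ((-1 : k) ^ len σ * q ^ (m - len σ)) • Tperm T σ with hf
  set P : Equiv.Perm (Fin (N+1)) → Prop :=
    fun σ => σ ∈ youngSubgroup Bm ∧ IsDistR Bl σ with hP
  set D : Finset (Equiv.Perm (Fin (N+1))) := Finset.univ.filter P with hD
  set E : Finset (Equiv.Perm (Fin (N+1))) := D.filter (fun σ => P (σ * tau j)) with hE
  set C : Finset (Equiv.Perm (Fin (N+1))) := D.filter (fun σ => ¬ P (σ * tau j)) with hC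
  set A : Finset (Equiv.Perm (Fin (N+1))) :=
    E.filter (fun σ => len (σ * tau j) = len σ + 1) with hA
  set A' : Finset (Equiv.Perm (Fin (N+1))) :=
    E.filter (fun σ => ¬ len (σ * tau j) = len σ + 1) with hA'
  have hbdd : BddAbove {r | ∃ σ, σ ∈ youngSubgroup Bm ∧ IsDistR Bl σ ∧ len σ = r} := by
    refine ⟨(N+1) * (N+1), ?_⟩
    rintro r ⟨σ', _, _, hr⟩
    exact hr ▸ len_le_bound σ'
  have hbound : ∀ σ ∈ A, len σ + 1 ≤ m := by
    intro σ hσ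
    rw [hA, Finset.mem_filter, hE, Finset.mem_filter] at hσ
    obtain ⟨⟨-, hPτ⟩, hup⟩ := hσ
    have hmem : len σ + 1 ∈ {r | ∃ σ, σ ∈ youngSubgroup Bm ∧ IsDistR Bl σ ∧ len σ = r} :=
      ⟨σ * tau j, hPτ.1, hPτ.2, hup⟩
    rw [hm]
    exact le_csSup hbdd hmem
  refine ⟨A, C, ?_, ?_⟩
  · intro σ hσ
    rw [hC, Finset.mem_filter, hD, Finset.mem_filter] at hσ
    obtain ⟨⟨-, hPσ⟩, hnP⟩ := hσ
    rcases dichotomy_R hPσ.2 j with hc | ⟨i, hiB, heq, hcs, hss⟩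
    · exfalso
      exact hnP ⟨Subgroup.mul_mem _ hPσ.1 (tau_mem_young hj), hc⟩
    · exact ⟨i, hiB, caseB_op_R hT heq (caseB_len_R hcs hss)⟩
  · have h1 : (∑ σ : Equiv.Perm (Fin (N + 1)),
        if σ ∈ youngSubgroup Bm ∧ IsDistR Bl σ then
          ((-1 : k) ^ len σ * q ^ (m - len σ)) • Tperm T σ else 0)
        = ∑ σ ∈ D, f σ := by
      rw [hD, Finset.sum_filter]
    rw [h1]
    have h2 : ∑ σ ∈ D, f σ = (∑ σ ∈ E, f σ) + ∑ σ ∈ C, f σ := by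
      rw [hE, hC]
      exact (Finset.sum_filter_add_sum_filter_not D _ _).symm
    rw [h2]
    have h3 : ∑ σ ∈ E, f σ = (∑ σ ∈ A, f σ) + ∑ σ ∈ A', f σ := by
      rw [hA, hA']
      exact (Finset.sum_filter_add_sum_filter_not E _ _).symm
    have hA'img : A' = A.image (fun σ => σ * tau j) := by
      ext σ
      simp only [hA', hA, hE, hD, Finset.mem_image, Finset.mem_filter, Finset.mem_univ, true_and]
      constructor
      · rintro ⟨⟨hPσ, hPτσ⟩, hnup⟩
        have hdown : len σ = len (σ * tau j) + 1 :=
          (len_mul_tau_lt_or j σ).resolve_left hnup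
        refine ⟨σ * tau j, ⟨⟨hPτσ, ?_⟩, ?_⟩, self_cancel_right j σ⟩
        · rw [self_cancel_right]; exact hPσ
        · rw [self_cancel_right]; omega
      · rintro ⟨σ₀, ⟨⟨⟨hPσ₀, hPτσ₀⟩, hup⟩, rfl⟩⟩
        rw [self_cancel_right]
        refine ⟨⟨hPτσ₀, hPσ₀⟩, ?_⟩
        omega
    have h4 : ∑ σ ∈ A', f σ = ∑ σ ∈ A, f (σ * tau j) := by
      rw [hA'img]
      apply Finset.sum_image
      intro a _ b _ hab
      exact mul_right_cancel hab
    rw [h3, h4, ← Finset.sum_add_distrib]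
    congr 1
    apply Finset.sum_congr rfl
    intro σ hσ
    have hup : len (σ * tau j) = len σ + 1 := by
      rw [hA, Finset.mem_filter] at hσ
      exact hσ.2
    have hTp : Tperm T (σ * tau j) = Tperm T σ * T j := Tperm_mul_tau hT hup
    rw [hf]
    simp only
    rw [hup, hTp]
    exact pair_combine q (hbound σ hσ) (Tperm T σ) (T j)


/-- for Young subgroups `S_λ ⊆ S_μ`, a Hecke module `M` with
`U_j = Ker(T_j - q)` (or uniformly `U_j = Im(T_j + 1)`),
`Υ(λ) = ⋂_{τ_j ∈ B_λ} U_j`, `Σ(λ) = Σ_{τ_j ∈ B_λ} U_j` (and similarly for `μ`),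
and the elements `x = Σ_{σ ∈ D(S_μ/S_λ)} T_σ` and
`y = Σ_{σ ∈ D(S_λ\S_μ)} (-1)^{ℓ(σ)} q^{m-ℓ(σ)} T_σ`
(`m` the maximal length of elements of `D(S_λ\S_μ)`), one has
`x·Υ(λ) ⊆ Υ(μ)` and `y·Σ(μ) ⊆ Σ(λ)`. -/
theorem hecke_shift_operators {M : Type} [AddCommGroup M] [Module k M]
    (q : k) (T : Fin N → Module.End k M) (hT : IsHeckeRep q T)
    (Bl Bm : Set (Fin N)) (hBB : Bl ⊆ Bm)
    (U : Fin N → Submodule k M)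
    (hU : (∀ i, U i = LinearMap.ker (T i - q • 1)) ∨
          (∀ i, U i = LinearMap.range (T i + 1)))
    (x y : Module.End k M) (m : ℕ)
    (hm : m = sSup {r | ∃ σ, σ ∈ youngSubgroup Bm ∧ IsDistR Bl σ ∧ len σ = r})
    (hx : x = ∑ σ : Equiv.Perm (Fin (N + 1)),
      if σ ∈ youngSubgroup Bm ∧ IsDistL Bl σ then Tperm T σ else 0)
    (hy : y = ∑ σ : Equiv.Perm (Fin (N + 1)),
      if σ ∈ youngSubgroup Bm ∧ IsDistR Bl σ then
        ((-1 : k) ^ len σ * q ^ (m - len σ)) • Tperm T σ else 0) :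
    (∀ v ∈ ⨅ (j : Fin N) (_ : j ∈ Bl), U j, x v ∈ ⨅ (j : Fin N) (_ : j ∈ Bm), U j) ∧
    (∀ v ∈ ⨆ (j : Fin N) (_ : j ∈ Bm), U j, y v ∈ ⨆ (j : Fin N) (_ : j ∈ Bl), U j) := by
  constructor
  · -- part 1
    intro v hv
    have hv' : ∀ i, i ∈ Bl → v ∈ U i := by
      intro i hi
      exact (Submodule.mem_iInf _).1 ((Submodule.mem_iInf _).1 hv i) hi
    rw [Submodule.mem_iInf]
    intro j
    rw [Submodule.mem_iInf]
    intro hj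
    obtain ⟨A, C, hCspec, hxeq⟩ := decomp_L hT Bl Bm hBB j hj
    rw [hx, hxeq]
    rw [LinearMap.add_apply, LinearMap.sum_apply, LinearMap.sum_apply]
    rcases hU with hU | hU
    · rw [hU, LinearMap.mem_ker, map_add, map_sum, map_sum]
      have hAterm : ∀ σ ∈ A, (T j - q • 1) (((T j + 1) * Tperm T σ) v) = 0 := by
        intro σ _
        have hop : (T j - q • 1) * ((T j + 1) * Tperm T σ) = 0 := by
          rw [← mul_assoc, hT.2.2, zero_mul]
        calc (T j - q • 1) (((T j + 1) * Tperm T σ) v)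
            = ((T j - q • 1) * ((T j + 1) * Tperm T σ)) v := rfl
          _ = 0 := by rw [hop]; rfl
      have hCterm : ∀ σ ∈ C, (T j - q • 1) ((Tperm T σ) v) = 0 := by
        intro σ hσ
        obtain ⟨i, hi, hop⟩ := hCspec σ hσ
        have hvU : v ∈ U i := hv' i hi
        rw [hU, LinearMap.mem_ker] at hvU
        have hTi : T i v = q • v := by
          rwa [LinearMap.sub_apply, LinearMap.smul_apply, Module.End.one_apply,
            sub_eq_zero] at hvU
        have hkey : T j ((Tperm T σ) v) = q • (Tperm T σ) v := by
          calc T j ((Tperm T σ) v) = (T j * Tperm T σ) v := rfl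
            _ = (Tperm T σ * T i) v := by rw [hop]
            _ = Tperm T σ (T i v) := rfl
            _ = Tperm T σ (q • v) := by rw [hTi]
            _ = q • Tperm T σ v := map_smul _ q v
        rw [LinearMap.sub_apply, LinearMap.smul_apply, Module.End.one_apply, hkey, sub_self]
      rw [Finset.sum_eq_zero hAterm, Finset.sum_eq_zero hCterm, add_zero]
    · rw [hU]
      apply Submodule.add_mem
      · apply Submodule.sum_mem
        intro σ _
        exact LinearMap.mem_range.2 ⟨Tperm T σ v, rfl⟩
      · apply Submodule.sum_mem
        intro σ hσ
        obtain ⟨i, hi, hop⟩ := hCspec σ hσ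
        have hvU : v ∈ U i := hv' i hi
        rw [hU] at hvU
        obtain ⟨w, hw⟩ := LinearMap.mem_range.1 hvU
        refine LinearMap.mem_range.2 ⟨Tperm T σ w, ?_⟩
        calc (T j + 1) (Tperm T σ w) = ((T j + 1) * Tperm T σ) w := rfl
          _ = (Tperm T σ * (T i + 1)) w := by
              rw [add_mul, one_mul, mul_add, mul_one, hop]
          _ = Tperm T σ ((T i + 1) w) := rfl
          _ = Tperm T σ v := by rw [hw]
  · -- part 2
    have hmain : ∀ j, j ∈ Bm → ∀ v ∈ U j, y v ∈ ⨆ i, ⨆ (_ : i ∈ Bl), U i := by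
      intro j hj v hvj
      obtain ⟨A, C, hCspec, hyeq⟩ := decomp_R hT Bl Bm hBB j hj m hm
      rw [hy, hyeq]
      rw [LinearMap.add_apply, LinearMap.sum_apply, LinearMap.sum_apply]
      have hkill : (q • (1 : Module.End k M) - T j) v = 0 := by
        rcases hU with hU | hU
        · have hv2 := hvj
          rw [hU, LinearMap.mem_ker] at hv2
          rw [LinearMap.sub_apply, LinearMap.smul_apply, Module.End.one_apply]
          rw [LinearMap.sub_apply, LinearMap.smul_apply, Module.End.one_apply] at hv2
          rw [sub_eq_zero] at hv2 ⊢
          exact hv2.symm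
        · have hv2 := hvj
          rw [hU] at hv2
          obtain ⟨w, hw⟩ := LinearMap.mem_range.1 hv2
          rw [← hw]
          calc (q • (1 : Module.End k M) - T j) ((T j + 1) w)
              = ((q • (1 : Module.End k M) - T j) * (T j + 1)) w := rfl
            _ = 0 := by
                have hneg : (q • (1 : Module.End k M) - T j) * (T j + 1)
                    = -((T j - q • 1) * (T j + 1)) := by
                  rw [← neg_sub, neg_mul]
                rw [hneg, hT.2.2, neg_zero, LinearMap.zero_apply]
      apply Submodule.add_mem
      · have hz : ∀ σ ∈ A,
            ((((-1:k) ^ len σ * q ^ (m - len σ - 1)) • (Tperm T σ * (q • 1 - T j))) v) = 0 := by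
          intro σ _
          rw [LinearMap.smul_apply]
          have he : (Tperm T σ * (q • (1 : Module.End k M) - T j)) v
              = Tperm T σ ((q • (1 : Module.End k M) - T j) v) := rfl
          rw [he, hkill, map_zero, smul_zero]
        rw [Finset.sum_eq_zero hz]
        exact Submodule.zero_mem _
      · apply Submodule.sum_mem
        intro σ hσ
        obtain ⟨i, hi, hop⟩ := hCspec σ hσ
        rw [LinearMap.smul_apply]
        apply Submodule.smul_mem
        apply Submodule.mem_iSup_of_mem i
        apply Submodule.mem_iSup_of_mem hi
        rcases hU with hU | hU
        · rw [hU, LinearMap.mem_ker]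
          have hv2 := hvj
          rw [hU, LinearMap.mem_ker] at hv2
          have hTj : T j v = q • v := by
            rwa [LinearMap.sub_apply, LinearMap.smul_apply, Module.End.one_apply,
              sub_eq_zero] at hv2
          rw [LinearMap.sub_apply, LinearMap.smul_apply, Module.End.one_apply]
          have he : T i (Tperm T σ v) = Tperm T σ (T j v) := by
            calc T i (Tperm T σ v) = (T i * Tperm T σ) v := rfl
              _ = (Tperm T σ * T j) v := by rw [hop]
              _ = Tperm T σ (T j v) := rfl
          rw [he, hTj, map_smul, sub_self]
        · rw [hU]
          have hv2 := hvj
          rw [hU] at hv2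
          obtain ⟨w, hw⟩ := LinearMap.mem_range.1 hv2
          refine LinearMap.mem_range.2 ⟨Tperm T σ w, ?_⟩
          calc (T i + 1) (Tperm T σ w) = ((T i + 1) * Tperm T σ) w := rfl
            _ = (Tperm T σ * (T j + 1)) w := by
                rw [add_mul, one_mul, mul_add, mul_one, hop]
            _ = Tperm T σ ((T j + 1) w) := rfl
            _ = Tperm T σ v := by rw [hw]
    intro v hv
    have hle : (⨆ j, ⨆ (_ : j ∈ Bm), U j) ≤
        Submodule.comap y (⨆ i, ⨆ (_ : i ∈ Bl), U i) := by
      apply iSup_le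
      intro j
      apply iSup_le
      intro hj
      intro w hw
      exact Submodule.mem_comap.2 (hmain j hj w hw)
    exact Submodule.mem_comap.1 (hle hv)

end
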